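/- Assume that lim_{n→∞} lim_{k→∞} ∏_{l=1}^{k-1}(1−|D_{n+l}|/|D_{n+l+1}|)=1 and that, for each 1≤i≤r, lim_{k→∞} ∑_{l=k+1}^{∞} |D_{i+lr-1}|/|D_{i+lr}|=0, and that (μ_{j+kr-1})_{k≥1} converges weak-* to ν_j for every 1≤j≤r. If μ is an invariant Borel probability measure of (X,σ,G) such that μ(C_{0,j})=ν_i(C_{0,j}) for every 1≤j≤r, where C_{0,j}={x∈X : x(1_G)=j}, then μ=ν_i. -/

import Mathlib

open Pointwise MeasureTheory Filter Topology

/-- The (left) shift action of `G` on `G → A`: `(σ^g x)(h) = x(g⁻¹ h)`. -/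
def shift {G A : Type*} [Group G] (g : G) (x : G → A) : G → A := fun h => x (g⁻¹ * h)

/-- `Per(x, Γ, α) = {g ∈ G : x(γ g) = α for all γ ∈ Γ}`. -/
def Per {G A : Type*} [Group G] (x : G → A) (Γ : Subgroup G) (α : A) : Set G :=
  {g : G | ∀ γ ∈ Γ, x (γ * g) = α}

/-- `Per(x, Γ) = ⋃_α Per(x, Γ, α)`. -/
def PerAll {G A : Type*} [Group G] (x : G → A) (Γ : Subgroup G) : Set G :=
  ⋃ α : A, Per x Γ α

/-- `x` is a Toeplitz array if every `g ∈ G` is periodic for some finite index subgroup. -/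
def IsToeplitz {G A : Type*} [Group G] (x : G → A) : Prop :=
  ∀ g : G, ∃ Γ : Subgroup G, Γ.FiniteIndex ∧ g ∈ PerAll x Γ

/-- `D` is a fundamental domain of `G / Γ`: every `g ∈ G` can be written uniquely as
`g = γ u` with `γ ∈ Γ` and `u ∈ D`. -/
def IsFundDomain {G : Type*} [Group G] (Γ : Subgroup G) (D : Finset G) : Prop :=
  ∀ g : G, ∃! p : G × G, p.1 ∈ Γ ∧ p.2 ∈ D ∧ g = p.1 * p.2

/-- The symbol `α_{m+1} ∈ Σ = {1, …, r}` of the construction: the symbol `j ∈ {1, …, r}` with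
`j ≡ m+1 (mod r)`, rendered in `Fin r` (the symbol `i ∈ {1, …, r}` corresponds to `i-1`). -/
def sym {r : ℕ} (hr : 1 < r) (m : ℕ) : Fin r := ⟨m % r, Nat.mod_lt m (by omega)⟩

namespace S19

variable {G : Type*} [Group G]

noncomputable def repD (Γ : Subgroup G) (D : Finset G) (h : IsFundDomain Γ D) (g : G) : G :=
  (h g).exists.choose.2

noncomputable def gamD (Γ : Subgroup G) (D : Finset G) (h : IsFundDomain Γ D) (g : G) : G :=
  (h g).exists.choose.1

lemma gamD_mem (Γ : Subgroup G) (D : Finset G) (h : IsFundDomain Γ D) (g : G) :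
    gamD Γ D h g ∈ Γ := (h g).exists.choose_spec.1

lemma repD_mem (Γ : Subgroup G) (D : Finset G) (h : IsFundDomain Γ D) (g : G) :
    repD Γ D h g ∈ D := (h g).exists.choose_spec.2.1

lemma gamD_mul_repD (Γ : Subgroup G) (D : Finset G) (h : IsFundDomain Γ D) (g : G) :
    g = gamD Γ D h g * repD Γ D h g := (h g).exists.choose_spec.2.2

lemma repD_eq_of {Γ : Subgroup G} {D : Finset G} (h : IsFundDomain Γ D) {γ d g : G}
    (hγ : γ ∈ Γ) (hd : d ∈ D) (hg : g = γ * d) : repD Γ D h g = d := by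
  have h2 : ((γ, d) : G × G).1 ∈ Γ ∧ ((γ, d) : G × G).2 ∈ D ∧ g = ((γ, d) : G × G).1 * ((γ, d) : G × G).2 :=
    ⟨hγ, hd, hg⟩
  have h1 : ((gamD Γ D h g, repD Γ D h g) : G × G).1 ∈ Γ ∧
      ((gamD Γ D h g, repD Γ D h g) : G × G).2 ∈ D ∧
      g = ((gamD Γ D h g, repD Γ D h g) : G × G).1 * ((gamD Γ D h g, repD Γ D h g) : G × G).2 :=
    ⟨gamD_mem Γ D h g, repD_mem Γ D h g, gamD_mul_repD Γ D h g⟩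
  have := (h g).unique h1 h2
  exact congrArg Prod.snd this

lemma repD_mul_left {Γ : Subgroup G} {D : Finset G} (h : IsFundDomain Γ D) {γ : G}
    (hγ : γ ∈ Γ) (g : G) : repD Γ D h (γ * g) = repD Γ D h g :=
  repD_eq_of h (mul_mem hγ (gamD_mem Γ D h g)) (repD_mem Γ D h g)
    (by rw [mul_assoc, ← gamD_mul_repD])

lemma repD_of_mem {Γ : Subgroup G} {D : Finset G} (h : IsFundDomain Γ D) {d : G}
    (hd : d ∈ D) : repD Γ D h d = d :=
  repD_eq_of h (one_mem Γ) hd (one_mul d).symm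

lemma sum_repD {M : Type*} [AddCommMonoid M] {Γ : Subgroup G} {D : Finset G}
    (h : IsFundDomain Γ D) (hN : Γ.Normal) (q p : G) (φ : G → M) :
    ∑ u ∈ D, φ (repD Γ D h (q * u * p)) = ∑ y ∈ D, φ y := by
  refine Finset.sum_nbij' (fun u => repD Γ D h (q * u * p))
    (fun y => repD Γ D h (q⁻¹ * y * p⁻¹)) (fun a _ => repD_mem Γ D h _)
    (fun a _ => repD_mem Γ D h _) ?_ ?_ (fun a _ => rfl)
  · intro u hu
    have e : gamD Γ D h (q * u * p) * repD Γ D h (q * u * p) = q * u * p :=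
      (gamD_mul_repD Γ D h _).symm
    have e3 : repD Γ D h (q * u * p) = (gamD Γ D h (q * u * p))⁻¹ * (q * u * p) :=
      eq_inv_mul_iff_mul_eq.mpr e
    have e2 : q⁻¹ * repD Γ D h (q * u * p) * p⁻¹
        = (q⁻¹ * (gamD Γ D h (q * u * p))⁻¹ * q) * u := by
      rw [e3]; group
    show repD Γ D h (q⁻¹ * repD Γ D h (q * u * p) * p⁻¹) = u
    rw [e2, repD_mul_left h (by simpa using hN.conj_mem _ (inv_mem (gamD_mem Γ D h _)) q⁻¹) u,
      repD_of_mem h hu]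
  · intro y hy
    have e : gamD Γ D h (q⁻¹ * y * p⁻¹) * repD Γ D h (q⁻¹ * y * p⁻¹) = q⁻¹ * y * p⁻¹ :=
      (gamD_mul_repD Γ D h _).symm
    have e3 : repD Γ D h (q⁻¹ * y * p⁻¹) = (gamD Γ D h (q⁻¹ * y * p⁻¹))⁻¹ * (q⁻¹ * y * p⁻¹) :=
      eq_inv_mul_iff_mul_eq.mpr e
    have e2 : q * repD Γ D h (q⁻¹ * y * p⁻¹) * p
        = (q * (gamD Γ D h (q⁻¹ * y * p⁻¹))⁻¹ * q⁻¹) * y := by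
      rw [e3]; group
    show repD Γ D h (q * repD Γ D h (q⁻¹ * y * p⁻¹) * p) = y
    rw [e2, repD_mul_left h (by simpa using hN.conj_mem _ (inv_mem (gamD_mem Γ D h _)) q) y,
      repD_of_mem h hy]

lemma value_lemma {r : ℕ} (hr : 1 < r)
    (Γ : ℕ → Subgroup G) (hanti : StrictAnti Γ) (hnormal : ∀ n, (Γ n).Normal)
    (D : ℕ → Finset G) (J : ℕ → Set G)
    (hJ : ∀ m, 1 ≤ m → J m = (D m : Set G) \ ⋃ i < m, J i * ((Γ (i + 1) : Subgroup G) : Set G))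
    (η : G → Fin r) (hηdef : ∀ (m : ℕ), ∀ h ∈ J m, ∀ g ∈ Γ (m + 1), η (h * g) = sym hr m)
    (M : ℕ) (hM : 1 ≤ M) {ζ : G} (hζ : ζ ∈ Γ M) {d : G} (hd : d ∈ D M) (hdJ : d ∉ J M) :
    η (ζ * d) = η d := by
  have hdU : d ∈ ⋃ m, ⋃ (_ : m < M), J m * ((Γ (m + 1) : Subgroup G) : Set G) := by
    by_contra hc
    exact hdJ ((hJ M hM).symm ▸ ⟨hd, hc⟩)
  obtain ⟨m, hm, hmem⟩ := Set.mem_iUnion₂.mp hdU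
  obtain ⟨h0, hh0, δ, hδ, heq⟩ := Set.mem_mul.mp hmem
  have h1 : η d = sym hr m := by rw [← heq]; exact hηdef m h0 hh0 δ hδ
  have hζ' : ζ ∈ Γ (m + 1) := hanti.antitone (by omega) hζ
  have hconj : h0⁻¹ * ζ * h0 ∈ Γ (m + 1) := by
    simpa using (hnormal (m + 1)).conj_mem ζ hζ' h0⁻¹
  have h2 : ζ * d = h0 * ((h0⁻¹ * ζ * h0) * δ) := by rw [← heq]; group
  rw [h2, hηdef m h0 hh0 _ (mul_mem hconj hδ), h1]

open Classical in
noncomputable def KCnt {r : ℕ} (D : ℕ → Finset G) (J : ℕ → Set G) (η : G → Fin r)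
    (i : Fin r) (M : ℕ) : ℝ :=
  ∑ y ∈ D M, if y ∈ J M then 0 else if η y = i then 0 else 1

open Classical in
noncomputable def valP {r : ℕ} (Γ : ℕ → Subgroup G) (D : ℕ → Finset G)
    (hfund : ∀ n, IsFundDomain (Γ n) (D n)) (J : ℕ → Set G) (η : G → Fin r)
    (i : Fin r) (M : ℕ) (h p : G) : Fin r :=
  if repD (Γ M) (D M) (hfund M) (h * p) ∈ J M then i
  else η (repD (Γ M) (D M) (hfund M) (h * p))

open Classical in
noncomputable def ACnt {r : ℕ} (Γ : ℕ → Subgroup G) (D : ℕ → Finset G)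
    (hfund : ∀ n, IsFundDomain (Γ n) (D n)) (J : ℕ → Set G) (η : G → Fin r)
    (i : Fin r) (F : Finset G) (w : G → Fin r) (M : ℕ) : ℝ :=
  ∑ h ∈ D M, ∏ p ∈ F, if valP Γ D hfund J η i M h p = w p then (1 : ℝ) else 0

end S19

namespace S19
set_option maxHeartbeats 1000000 in
lemma main_estimate {G : Type*} [Group G] [Countable G] {r : ℕ} (hr : 1 < r)
    (Γ : ℕ → Subgroup G) (hanti : StrictAnti Γ) (hnormal : ∀ n, (Γ n).Normal)
    (D : ℕ → Finset G) (hfund : ∀ n, IsFundDomain (Γ n) (D n))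
    (J : ℕ → Set G)
    (hJ : ∀ m, 1 ≤ m → J m = (D m : Set G) \ ⋃ i < m, J i * ((Γ (i + 1) : Subgroup G) : Set G))
    (η : G → Fin r) (hηdef : ∀ (m : ℕ), ∀ h ∈ J m, ∀ g ∈ Γ (m + 1), η (h * g) = sym hr m)
    (X : Set (G → Fin r)) (hX : X = closure {y | ∃ g : G, y = shift g η})
    (i : Fin r) (F : Finset G) (w : G → Fin r) (M : ℕ) (hM : 1 ≤ M)
    (ρ : Measure (G → Fin r)) [IsProbabilityMeasure ρ]
    (hρinv : ∀ g : G, Measure.map (shift g) ρ = ρ) (hρX : ρ X = 1) :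
    |((D M).card : ℝ) * (ρ {x | ∀ p ∈ F, x p = w p}).toReal - ACnt Γ D hfund J η i F w M| ≤
      (F.card : ℝ) * (((D M).card : ℝ) * (ρ {x | ¬ x 1 = i}).toReal - KCnt D J η i M) := by
  classical
  set R : G → G := repD (Γ M) (D M) (hfund M) with hR
  set C : Set (G → Fin r) := {x | ∀ p ∈ F, x p = w p} with hCdef
  set A : (G → Fin r) → ℝ :=
    fun x => ∑ u ∈ D M, ∏ p ∈ F, if x (u * p) = w p then (1 : ℝ) else 0 with hAdef
  set B : G → (G → Fin r) → ℝ :=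
    fun p x => ∑ u ∈ D M, if x (u * p) = i then (0 : ℝ) else 1 with hBdef
  have hshift_meas : ∀ q : G, Measurable (shift q : (G → Fin r) → (G → Fin r)) :=
    fun q => measurable_pi_lambda _ fun h => measurable_pi_apply _
  have hC_meas : MeasurableSet C := by
    have hCi : C = ⋂ p ∈ F, (fun x : G → Fin r => x p) ⁻¹' {w p} := by
      ext x; simp [hCdef]
    rw [hCi]
    exact MeasurableSet.biInter F.countable_toSet
      (fun p _ => (measurable_pi_apply p) (measurableSet_singleton (w p)))
  have hNi_meas : MeasurableSet {x : G → Fin r | ¬ x 1 = i} := by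
    have h2 : {x : G → Fin r | ¬ x 1 = i} = ((fun x : G → Fin r => x 1) ⁻¹' {i})ᶜ := by
      ext x; simp
    rw [h2]
    exact ((measurable_pi_apply 1) (measurableSet_singleton i)).compl
  -- A side : integral computations
  have hAterm : ∀ u : G,
      (fun x : G → Fin r => ∏ p ∈ F, if x (u * p) = w p then (1 : ℝ) else 0)
        = Set.indicator ((shift u⁻¹) ⁻¹' C) (fun _ => (1 : ℝ)) := by
    intro u
    funext x
    have hmem : x ∈ (shift u⁻¹) ⁻¹' C ↔ ∀ p ∈ F, x (u * p) = w p := by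
      simp [hCdef, shift, Set.mem_preimage]
    rw [Finset.prod_boole]
    by_cases hx : ∀ p ∈ F, x (u * p) = w p
    · rw [if_pos hx, Set.indicator_of_mem (hmem.mpr hx)]
    · rw [if_neg hx, Set.indicator_of_notMem (fun hc => hx (hmem.mp hc))]
  have hSu_meas : ∀ u : G, MeasurableSet ((shift u⁻¹) ⁻¹' C) := fun u => hshift_meas u⁻¹ hC_meas
  have hAterm_int : ∀ u : G, Integrable
      (fun x : G → Fin r => ∏ p ∈ F, if x (u * p) = w p then (1 : ℝ) else 0) ρ := by
    intro u; rw [hAterm u]; exact (integrable_const 1).indicator (hSu_meas u)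
  have hρSu : ∀ u : G, ρ ((shift u⁻¹) ⁻¹' C) = ρ C := by
    intro u
    rw [← Measure.map_apply (hshift_meas u⁻¹) hC_meas, hρinv u⁻¹]
  have hAint : Integrable A ρ := by
    rw [hAdef]; exact integrable_finset_sum _ (fun u _ => hAterm_int u)
  have hintA : ∫ x, A x ∂ρ = ((D M).card : ℝ) * (ρ C).toReal := by
    rw [hAdef]
    rw [integral_finset_sum _ (fun u _ => hAterm_int u)]
    have h3 : ∀ u ∈ D M,
        ∫ x, (∏ p ∈ F, if x (u * p) = w p then (1 : ℝ) else 0) ∂ρ = (ρ C).toReal := by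
      intro u _
      rw [hAterm u, integral_indicator_const (1 : ℝ) (hSu_meas u), measureReal_def, hρSu u, smul_eq_mul, mul_one]
    rw [Finset.sum_congr rfl h3, Finset.sum_const, nsmul_eq_mul]
  -- B side
  have hBterm : ∀ q : G, (fun x : G → Fin r => if x q = i then (0 : ℝ) else 1)
      = Set.indicator ((shift q⁻¹) ⁻¹' {x | ¬ x 1 = i}) (fun _ => (1 : ℝ)) := by
    intro q; funext x
    have hmem : x ∈ (shift q⁻¹) ⁻¹' {x : G → Fin r | ¬ x 1 = i} ↔ ¬ x q = i := by
      simp [shift, Set.mem_preimage]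
    by_cases hx : x q = i
    · rw [if_pos hx, Set.indicator_of_notMem (fun hc => (hmem.mp hc) hx)]
    · rw [if_neg hx, Set.indicator_of_mem (hmem.mpr hx)]
  have hBterm_int : ∀ q : G,
      Integrable (fun x : G → Fin r => if x q = i then (0 : ℝ) else 1) ρ := by
    intro q; rw [hBterm q]
    exact (integrable_const 1).indicator ((hshift_meas q⁻¹) hNi_meas)
  have hρq : ∀ q : G, ρ ((shift q⁻¹) ⁻¹' {x | ¬ x 1 = i}) = ρ {x | ¬ x 1 = i} := by
    intro q
    rw [← Measure.map_apply (hshift_meas q⁻¹) hNi_meas, hρinv q⁻¹]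
  have hBint : ∀ p : G, Integrable (B p) ρ := by
    intro p; rw [hBdef]; exact integrable_finset_sum _ (fun u _ => hBterm_int (u * p))
  have hintB : ∀ p : G, ∫ x, B p x ∂ρ = ((D M).card : ℝ) * (ρ {x | ¬ x 1 = i}).toReal := by
    intro p
    rw [hBdef]
    rw [integral_finset_sum _ (fun u _ => hBterm_int (u * p))]
    have h3 : ∀ u ∈ D M,
        ∫ x, (if x (u * p) = i then (0 : ℝ) else 1) ∂ρ = (ρ {x | ¬ x 1 = i}).toReal := by
      intro u _
      rw [hBterm (u * p), integral_indicator_const (1 : ℝ) ((hshift_meas (u * p)⁻¹) hNi_meas),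
        measureReal_def, hρq (u * p), smul_eq_mul, mul_one]
    rw [Finset.sum_congr rfl h3, Finset.sum_const, nsmul_eq_mul]
  -- orbit inequality
  have horb : ∀ g : G, |A (shift g η) - ACnt Γ D hfund J η i F w M|
      ≤ ∑ p ∈ F, (B p (shift g η) - KCnt D J η i M) := by
    intro g
    have hxv : ∀ u p : G, (shift g η) (u * p) = η (g⁻¹ * u * p) := by
      intro u p; simp [shift, mul_assoc]
    have hval : ∀ z : G, R z ∉ J M → η z = η (R z) := by
      intro z hz
      conv_lhs => rw [gamD_mul_repD (Γ M) (D M) (hfund M) z]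
      exact value_lemma hr Γ hanti hnormal D J hJ η hηdef M hM
        (gamD_mem _ _ _ _) (repD_mem _ _ _ _) hz
    set c : G → G → ℝ := fun u p =>
      if R (g⁻¹ * u * p) ∈ J M then (if η (g⁻¹ * u * p) = i then 0 else 1) else 0 with hcdef
    have hc_nonneg : ∀ u p, 0 ≤ c u p := by
      intro u p; rw [hcdef]; dsimp only; split_ifs <;> norm_num
    have hBp : ∀ p : G, B p (shift g η) = (∑ u ∈ D M, c u p) + KCnt D J η i M := by
      intro p
      rw [hBdef]
      dsimp only
      have h4 : ∀ u ∈ D M, (if (shift g η) (u * p) = i then (0 : ℝ) else 1)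
          = c u p + (fun y => if y ∈ J M then (0 : ℝ) else if η y = i then 0 else 1)
              (R (g⁻¹ * u * p)) := by
        intro u _
        rw [hxv u p, hcdef]
        dsimp only
        by_cases hz : R (g⁻¹ * u * p) ∈ J M
        · rw [if_pos hz, if_pos hz, add_zero]
        · rw [if_neg hz, if_neg hz, zero_add, hval _ hz]
      rw [Finset.sum_congr rfl h4, Finset.sum_add_distrib,
        sum_repD (hfund M) (hnormal M) g⁻¹ p
          (fun y => if y ∈ J M then (0 : ℝ) else if η y = i then 0 else 1)]
      rfl
    have hACnt : ACnt Γ D hfund J η i F w M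
        = ∑ u ∈ D M, ∏ p ∈ F,
            if valP Γ D hfund J η i M (R (g⁻¹ * u)) p = w p then (1 : ℝ) else 0 := by
      rw [show ACnt Γ D hfund J η i F w M = ∑ h ∈ D M, ∏ p ∈ F,
          if valP Γ D hfund J η i M h p = w p then (1 : ℝ) else 0 from rfl]
      rw [← sum_repD (hfund M) (hnormal M) g⁻¹ 1
        (fun h => ∏ p ∈ F, if valP Γ D hfund J η i M h p = w p then (1 : ℝ) else 0)]
      exact Finset.sum_congr rfl (fun u _ => by rw [mul_one])
    have hu_ineq : ∀ u ∈ D M,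
        |(∏ p ∈ F, if (shift g η) (u * p) = w p then (1 : ℝ) else 0)
          - ∏ p ∈ F, if valP Γ D hfund J η i M (R (g⁻¹ * u)) p = w p then (1 : ℝ) else 0|
        ≤ ∑ p ∈ F, c u p := by
      intro u _
      have hrr : ∀ p : G, R (R (g⁻¹ * u) * p) = R (g⁻¹ * u * p) := by
        intro p
        conv_rhs => rw [show g⁻¹ * u * p
          = gamD (Γ M) (D M) (hfund M) (g⁻¹ * u) * (R (g⁻¹ * u) * p) by
            rw [← mul_assoc, ← gamD_mul_repD]]
        exact (repD_mul_left (hfund M) (gamD_mem _ _ _ _) _).symm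
      by_cases hgood : ∀ p ∈ F, R (g⁻¹ * u * p) ∈ J M → η (g⁻¹ * u * p) = i
      · have h5 : ∀ p ∈ F, ((if (shift g η) (u * p) = w p then (1 : ℝ) else 0)
            = if valP Γ D hfund J η i M (R (g⁻¹ * u)) p = w p then (1 : ℝ) else 0) := by
          intro p hp
          have hveq : (shift g η) (u * p) = valP Γ D hfund J η i M (R (g⁻¹ * u)) p := by
            rw [hxv u p, show valP Γ D hfund J η i M (R (g⁻¹ * u)) p
              = if R (R (g⁻¹ * u) * p) ∈ J M then i else η (R (R (g⁻¹ * u) * p)) from rfl,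
              hrr p]
            by_cases hz : R (g⁻¹ * u * p) ∈ J M
            · rw [if_pos hz]; exact hgood p hp hz
            · rw [if_neg hz]; exact hval _ hz
          rw [hveq]
        rw [Finset.prod_congr rfl h5, sub_self, abs_zero]
        exact Finset.sum_nonneg (fun p _ => hc_nonneg u p)
      · push_neg at hgood
        obtain ⟨p₀, hp₀F, hp₀J, hp₀ne⟩ := hgood
        have ha0 : (0 : ℝ) ≤ ∏ p ∈ F, if (shift g η) (u * p) = w p then (1 : ℝ) else 0 :=
          Finset.prod_nonneg (fun p _ => by split_ifs <;> norm_num)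
        have ha1 : (∏ p ∈ F, if (shift g η) (u * p) = w p then (1 : ℝ) else 0) ≤ 1 :=
          Finset.prod_le_one (fun p _ => by split_ifs <;> norm_num)
            (fun p _ => by split_ifs <;> norm_num)
        have hb0 : (0 : ℝ) ≤ ∏ p ∈ F,
            if valP Γ D hfund J η i M (R (g⁻¹ * u)) p = w p then (1 : ℝ) else 0 :=
          Finset.prod_nonneg (fun p _ => by split_ifs <;> norm_num)
        have hb1 : (∏ p ∈ F,
            if valP Γ D hfund J η i M (R (g⁻¹ * u)) p = w p then (1 : ℝ) else 0) ≤ 1 :=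
          Finset.prod_le_one (fun p _ => by split_ifs <;> norm_num)
            (fun p _ => by split_ifs <;> norm_num)
        have h1le : (1 : ℝ) ≤ ∑ p ∈ F, c u p := by
          have hc1 : c u p₀ = 1 := by
            rw [hcdef]; dsimp only; rw [if_pos hp₀J, if_neg hp₀ne]
          calc (1 : ℝ) = c u p₀ := hc1.symm
            _ ≤ ∑ p ∈ F, c u p := Finset.single_le_sum (fun p _ => hc_nonneg u p) hp₀F
        rw [abs_le]
        constructor <;> nlinarith
    calc |A (shift g η) - ACnt Γ D hfund J η i F w M|
        = |∑ u ∈ D M, ((∏ p ∈ F, if (shift g η) (u * p) = w p then (1 : ℝ) else 0)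
            - ∏ p ∈ F, if valP Γ D hfund J η i M (R (g⁻¹ * u)) p = w p then (1 : ℝ) else 0)| := by
          rw [hAdef, hACnt, Finset.sum_sub_distrib]
      _ ≤ ∑ u ∈ D M, |(∏ p ∈ F, if (shift g η) (u * p) = w p then (1 : ℝ) else 0)
            - ∏ p ∈ F, if valP Γ D hfund J η i M (R (g⁻¹ * u)) p = w p then (1 : ℝ) else 0| :=
          Finset.abs_sum_le_sum_abs _ _
      _ ≤ ∑ u ∈ D M, ∑ p ∈ F, c u p := Finset.sum_le_sum hu_ineq
      _ = ∑ p ∈ F, ∑ u ∈ D M, c u p := Finset.sum_comm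
      _ = ∑ p ∈ F, (B p (shift g η) - KCnt D J η i M) := by
          refine Finset.sum_congr rfl (fun p _ => ?_)
          rw [hBp p]; ring
  -- continuity and passage to the closure
  have hterm_cont : ∀ (q : G) (v : Fin r) (a b : ℝ),
      Continuous (fun x : G → Fin r => if x q = v then a else b) := by
    intro q v a b
    have h6 : (fun x : G → Fin r => if x q = v then a else b)
        = (fun s : Fin r => if s = v then a else b) ∘ (fun x : G → Fin r => x q) := rfl
    rw [h6]
    exact Continuous.comp (continuous_of_discreteTopology) (continuous_apply q)
  have hA_cont : Continuous A := by
    rw [hAdef]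
    exact continuous_finset_sum _
      (fun u _ => continuous_finset_prod _ (fun p _ => hterm_cont (u * p) (w p) 1 0))
  have hB_cont : ∀ p : G, Continuous (B p) := by
    intro p
    rw [hBdef]
    exact continuous_finset_sum _ (fun u _ => hterm_cont (u * p) i 0 1)
  have hXsub : ∀ x ∈ X, |A x - ACnt Γ D hfund J η i F w M|
      ≤ ∑ p ∈ F, (B p x - KCnt D J η i M) := by
    have hclosed : IsClosed {x : G → Fin r |
        |A x - ACnt Γ D hfund J η i F w M| ≤ ∑ p ∈ F, (B p x - KCnt D J η i M)} :=
      isClosed_le ((hA_cont.sub continuous_const).abs)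
        (continuous_finset_sum _ (fun p _ => ((hB_cont p).sub continuous_const)))
    intro x hx
    have h7 : X ⊆ {x : G → Fin r |
        |A x - ACnt Γ D hfund J η i F w M| ≤ ∑ p ∈ F, (B p x - KCnt D J η i M)} := by
      rw [hX]
      exact closure_minimal (fun y hy => by obtain ⟨g, rfl⟩ := hy; exact horb g) hclosed
    exact h7 hx
  -- integrate
  have hXmeas : MeasurableSet X := by rw [hX]; exact isClosed_closure.measurableSet
  have hXc : ρ Xᶜ = 0 := by
    rw [prob_compl_eq_one_sub hXmeas, hρX, tsub_self]
  have hae : ∀ᵐ x ∂ρ, |A x - ACnt Γ D hfund J η i F w M|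
      ≤ ∑ p ∈ F, (B p x - KCnt D J η i M) := by
    rw [Filter.eventually_iff, mem_ae_iff]
    refine measure_mono_null ?_ hXc
    intro x hx hxX
    exact hx (hXsub x hxX)
  have hRHSint : Integrable (fun x => ∑ p ∈ F, (B p x - KCnt D J η i M)) ρ :=
    integrable_finset_sum _ (fun p _ => (hBint p).sub (integrable_const _))
  have habs_int : Integrable (fun x => |A x - ACnt Γ D hfund J η i F w M|) ρ :=
    (hAint.sub (integrable_const _)).abs
  calc |((D M).card : ℝ) * (ρ C).toReal - ACnt Γ D hfund J η i F w M|
      = |∫ x, (A x - ACnt Γ D hfund J η i F w M) ∂ρ| := by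
        rw [integral_sub hAint (integrable_const _), hintA, integral_const, measureReal_def, measure_univ,
          ENNReal.toReal_one, one_smul]
    _ ≤ ∫ x, |A x - ACnt Γ D hfund J η i F w M| ∂ρ := by
        simpa [Real.norm_eq_abs] using
          norm_integral_le_integral_norm (μ := ρ)
            (fun x => A x - ACnt Γ D hfund J η i F w M)
    _ ≤ ∫ x, ∑ p ∈ F, (B p x - KCnt D J η i M) ∂ρ := integral_mono_ae habs_int hRHSint hae
    _ = ∑ p ∈ F, ∫ x, (B p x - KCnt D J η i M) ∂ρ :=
        integral_finset_sum _ (fun p _ => (hBint p).sub (integrable_const _))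
    _ = ∑ p ∈ F, (((D M).card : ℝ) * (ρ {x | ¬ x 1 = i}).toReal - KCnt D J η i M) := by
        refine Finset.sum_congr rfl (fun p _ => ?_)
        rw [integral_sub (hBint p) (integrable_const _), hintB p, integral_const, measureReal_def, measure_univ,
          ENNReal.toReal_one, one_smul]
    _ = (F.card : ℝ) * (((D M).card : ℝ) * (ρ {x | ¬ x 1 = i}).toReal - KCnt D J η i M) := by
        rw [Finset.sum_const, nsmul_eq_mul]

end S19

namespace S19

lemma integral_chi {G : Type*} [Group G] [Countable G] {r : ℕ}
    (D : ℕ → Finset G) (η : G → Fin r) (ηn : ℕ → G → Fin r) (i : Fin r)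
    (N : ℕ) (hηnN : ∀ u ∈ D N, ηn N u = η u)
    (μN : MeasureTheory.Measure (G → Fin r))
    (hμN : μN = (((D N).card : ENNReal))⁻¹ • ∑ u ∈ D N, MeasureTheory.Measure.dirac (shift u⁻¹ (ηn N))) :
    ∫ x, (if x 1 = i then (0:ℝ) else 1) ∂μN
      = (((D N).card : ℝ))⁻¹ * ∑ u ∈ D N, (if η u = i then (0:ℝ) else 1) := by
  classical
  have hNi_meas : MeasurableSet {x : G → Fin r | ¬ x 1 = i} := by
    have h2 : {x : G → Fin r | ¬ x 1 = i} = ((fun x : G → Fin r => x 1) ⁻¹' {i})ᶜ := by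
      ext x; simp
    rw [h2]
    exact ((measurable_pi_apply 1) (measurableSet_singleton i)).compl
  have hind : (fun x : G → Fin r => if x 1 = i then (0:ℝ) else 1)
      = Set.indicator {x : G → Fin r | ¬ x 1 = i} (fun _ => 1) := by
    funext x; by_cases hx : x 1 = i
    · rw [if_pos hx]
      exact (Set.indicator_of_notMem (by simp [hx]) (fun _ => (1:ℝ))).symm
    · rw [if_neg hx]
      exact (Set.indicator_of_mem (hx : x ∈ {x : G → Fin r | ¬ x 1 = i}) (fun _ => (1:ℝ))).symm
  have hint : ∀ u ∈ D N, MeasureTheory.Integrable (fun x : G → Fin r => if x 1 = i then (0:ℝ) else 1)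
      (MeasureTheory.Measure.dirac (shift u⁻¹ (ηn N))) := by
    intro u _; rw [hind]
    exact (MeasureTheory.integrable_const 1).indicator hNi_meas
  rw [hμN, MeasureTheory.integral_smul_measure, MeasureTheory.integral_finset_sum_measure hint,
    smul_eq_mul]
  congr 1
  · rw [ENNReal.toReal_inv]; simp
  refine Finset.sum_congr rfl (fun u hu => ?_)
  rw [MeasureTheory.integral_dirac]
  have hv : (shift u⁻¹ (ηn N)) 1 = η u := by
    show ηn N ((u⁻¹)⁻¹ * 1) = η u
    rw [inv_inv, mul_one, hηnN u hu]
  rw [hv]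

end S19

set_option maxHeartbeats 1000000 in
theorem statement19 {G : Type*} [Group G] [Countable G]
    {r : ℕ} (hr : 1 < r)
    -- the sequence of subgroups (with the convention `Γ 0 = G`, the data of the paper being
    -- `Γ 1 > Γ 2 > ⋯`)
    (Γ : ℕ → Subgroup G) (hΓ0 : Γ 0 = ⊤) (hanti : StrictAnti Γ)
    (hnormal : ∀ n, (Γ n).Normal) (hfi : ∀ n, (Γ n).FiniteIndex)
    (hint : (⨅ n, Γ n) = ⊥) (hidx : ∀ n, 3 ≤ (Γ (n + 1)).relIndex (Γ n))
    -- the fundamental domains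
    (D : ℕ → Finset G) (hD0 : D 0 = {1}) (hfund : ∀ n, IsFundDomain (Γ n) (D n))
    (hone : ∀ n, (1 : G) ∈ D n) (hDmono : ∀ n, D n ⊆ D (n + 1))
    (hcoverD : ∀ g : G, ∃ n, g ∈ D n)
    (hdecomp : ∀ i j, i < j →
      (D j : Set G) = ⋃ v ∈ (D j : Set G) ∩ (Γ i : Set G), v • (D i : Set G))
    -- the sets `J m`
    (J : ℕ → Set G) (hJ0 : J 0 = {1})
    (hJ : ∀ m, 1 ≤ m → J m = (D m : Set G) \ ⋃ i < m, J i * ((Γ (i + 1) : Subgroup G) : Set G))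
    -- the Toeplitz array `η`
    (η : G → Fin r)
    (hηdef : ∀ (m : ℕ), ∀ h ∈ J m, ∀ g ∈ Γ (m + 1), η (h * g) = sym hr m)
    -- `X` is the orbit closure of `η`
    (X : Set (G → Fin r)) (hX : X = closure {y | ∃ g : G, y = shift g η})
    -- the `Γ n`-periodic configurations `η_n` and the periodic measures `μ_n`
    (ηn : ℕ → G → Fin r) (hηn : ∀ n, ∀ γ ∈ Γ n, ∀ g ∈ D n, ηn n (γ * g) = η g)
    (μseq : ℕ → Measure (G → Fin r))
    (hμseq : ∀ n, μseq n =
      (((D n).card : ENNReal))⁻¹ • ∑ u ∈ D n, Measure.dirac (shift u⁻¹ (ηn n)))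
    -- first limit assumption: `lim_n lim_k ∏_{l=1}^{k-1} (1 - |D (n+l)|/|D (n+l+1)|) = 1`
    (P : ℕ → ℝ)
    (hP : ∀ n, Tendsto
      (fun k => ∏ l ∈ Finset.Icc 1 (k - 1), (1 - ((D (n + l)).card : ℝ) / (D (n + l + 1)).card))
      atTop (nhds (P n)))
    (hP1 : Tendsto P atTop (nhds 1))
    -- second limit assumption: `lim_k ∑_{l=k+1}^∞ |D_{i+lr-1}|/|D_{i+lr}| = 0` for each `i`
    -- (the symbol `i ∈ {1,…,r}` corresponding to `i : Fin r` is `(i : ℕ) + 1`)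
    (hsum : ∀ i : Fin r, Tendsto
      (fun k => ∑' l : ℕ, if l ≤ k then 0 else
        ((D ((i : ℕ) + l * r)).card : ℝ) / (D ((i : ℕ) + 1 + l * r)).card)
      atTop (nhds 0))
    -- for each symbol `j`, `ν j` is the weak-* limit of the subsequence `(μ_{j+kr-1})_k`,
    -- an invariant probability measure supported on `X`
    (ν : Fin r → Measure (G → Fin r))
    (hν : ∀ j : Fin r, IsProbabilityMeasure (ν j) ∧
      (∀ g : G, Measure.map (shift g) (ν j) = ν j) ∧ (ν j) X = 1 ∧
      ∀ f : (G → Fin r) → ℝ, Continuous f →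
        Tendsto (fun k => ∫ x, f x ∂(μseq ((j : ℕ) + (k + 1) * r))) atTop
          (nhds (∫ x, f x ∂(ν j)))) :
    -- any invariant probability measure agreeing with `ν i` on the symbol cylinders is `ν i`
    ∀ i : Fin r, ∀ μ : Measure (G → Fin r),
      IsProbabilityMeasure μ → (∀ g : G, Measure.map (shift g) μ = μ) → μ X = 1 →
      (∀ j : Fin r, μ {x | x ∈ X ∧ x 1 = j} = (ν i) {x | x ∈ X ∧ x 1 = j}) →
      μ = ν i := by
    classical
  intro i μ hμprob hμinv hμX hagree
  obtain ⟨hνprob, hνinv, hνX, hνlim⟩ := hν i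
  haveI := hμprob
  haveI := hνprob
  have hXmeas : MeasurableSet X := by rw [hX]; exact isClosed_closure.measurableSet
  have hSi_meas : MeasurableSet {x : G → Fin r | x 1 = i} := by
    have hset : {x : G → Fin r | x 1 = i} = (fun x : G → Fin r => x 1) ⁻¹' {i} := by
      ext x; simp
    rw [hset]
    exact (measurable_pi_apply 1) (measurableSet_singleton i)
  -- full-measure reduction of the cylinder hypothesis
  have hfull : ∀ (ρ : Measure (G → Fin r)), IsProbabilityMeasure ρ → ρ X = 1 →
      ∀ j : Fin r, ρ {x | x ∈ X ∧ x 1 = j} = ρ {x | x 1 = j} := by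
    intro ρ hρ hρX j
    haveI := hρ
    have h1 : {x : G → Fin r | x ∈ X ∧ x 1 = j} = {x | x 1 = j} ∩ X := by
      ext x; exact and_comm
    have h2 : ρ ({x : G → Fin r | x 1 = j} ∩ X) + ρ ({x : G → Fin r | x 1 = j} \ X)
        = ρ {x | x 1 = j} := measure_inter_add_diff _ hXmeas
    have h3 : ρ ({x : G → Fin r | x 1 = j} \ X) = 0 := by
      have hsub : {x : G → Fin r | x 1 = j} \ X ⊆ Xᶜ := fun x hx => hx.2
      refine measure_mono_null hsub ?_
      rw [prob_compl_eq_one_sub hXmeas, hρX, tsub_self]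
    rw [h1, ← h2, h3, add_zero]
  have hagree1 : μ {x : G → Fin r | x 1 = i} = ν i {x : G → Fin r | x 1 = i} := by
    rw [← hfull μ hμprob hμX i, ← hfull (ν i) hνprob hνX i]
    exact hagree i
  have hagreeN : μ {x : G → Fin r | ¬ x 1 = i} = ν i {x : G → Fin r | ¬ x 1 = i} := by
    have hcompl : {x : G → Fin r | ¬ x 1 = i} = {x : G → Fin r | x 1 = i}ᶜ := rfl
    rw [hcompl, prob_compl_eq_one_sub hSi_meas, prob_compl_eq_one_sub hSi_meas, hagree1]
  -- main step : agreement on all cylinders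
  have cylEq : ∀ (F : Finset G) (w : G → Fin r),
      μ {x | ∀ p ∈ F, x p = w p} = ν i {x | ∀ p ∈ F, x p = w p} := by
    intro F w
    have hNK1 : ∀ k : ℕ, 1 ≤ (i : ℕ) + (k + 1) * r := by
      intro k
      have : 1 ≤ (k + 1) * r := Nat.one_le_iff_ne_zero.mpr (by positivity)
      omega
    have hsymNK : ∀ k : ℕ, sym hr ((i : ℕ) + (k + 1) * r) = i := by
      intro k
      apply Fin.ext
      show ((i : ℕ) + (k + 1) * r) % r = (i : ℕ)
      rw [Nat.add_mul_mod_self_right]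
      exact Nat.mod_eq_of_lt i.isLt
    have hηJ : ∀ k : ℕ, ∀ y ∈ J ((i : ℕ) + (k + 1) * r), η y = i := by
      intro k y hy
      have h5 := hηdef ((i : ℕ) + (k + 1) * r) y hy 1 (one_mem _)
      rwa [mul_one, hsymNK k] at h5
    have hKeq : ∀ k : ℕ, ∑ u ∈ D ((i : ℕ) + (k + 1) * r), (if η u = i then (0:ℝ) else 1)
        = S19.KCnt D J η i ((i : ℕ) + (k + 1) * r) := by
      intro k
      rw [show S19.KCnt D J η i ((i : ℕ) + (k + 1) * r)
        = ∑ y ∈ D ((i : ℕ) + (k + 1) * r), if y ∈ J ((i : ℕ) + (k + 1) * r) then (0:ℝ)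
            else if η y = i then 0 else 1 from rfl]
      refine Finset.sum_congr rfl (fun y _ => ?_)
      by_cases hyJ : y ∈ J ((i : ℕ) + (k + 1) * r)
      · rw [if_pos hyJ, if_pos (hηJ k y hyJ)]
      · rw [if_neg hyJ]
    have hNi_meas : MeasurableSet {x : G → Fin r | ¬ x 1 = i} := hSi_meas.compl
    have hintχν : ∫ x, (if x 1 = i then (0:ℝ) else 1) ∂(ν i)
        = (ν i {x : G → Fin r | ¬ x 1 = i}).toReal := by
      have hind : (fun x : G → Fin r => if x 1 = i then (0:ℝ) else 1)
          = Set.indicator {x : G → Fin r | ¬ x 1 = i} (fun _ => 1) := by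
        funext x; by_cases hx : x 1 = i
        · rw [if_pos hx]
          exact (Set.indicator_of_notMem (by simp [hx]) (fun _ => (1:ℝ))).symm
        · rw [if_neg hx]
          exact (Set.indicator_of_mem (hx : x ∈ {x : G → Fin r | ¬ x 1 = i})
            (fun _ => (1:ℝ))).symm
      rw [hind, integral_indicator_const (1:ℝ) hNi_meas, smul_eq_mul, mul_one, measureReal_def]
    have hμseqint : ∀ k : ℕ, ∫ x, (if x 1 = i then (0:ℝ) else 1) ∂(μseq ((i : ℕ) + (k + 1) * r))
        = (((D ((i : ℕ) + (k + 1) * r)).card : ℝ))⁻¹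
            * S19.KCnt D J η i ((i : ℕ) + (k + 1) * r) := by
      intro k
      rw [S19.integral_chi D η ηn i ((i : ℕ) + (k + 1) * r)
        (fun u hu => by
          have h5 := hηn ((i : ℕ) + (k + 1) * r) 1 (one_mem _) u hu
          rwa [one_mul] at h5)
        _ (hμseq ((i : ℕ) + (k + 1) * r)), hKeq k]
    have hχcont : Continuous (fun x : G → Fin r => if x 1 = i then (0:ℝ) else 1) := by
      have h6 : (fun x : G → Fin r => if x 1 = i then (0:ℝ) else 1)
          = (fun s : Fin r => if s = i then (0:ℝ) else 1) ∘ (fun x : G → Fin r => x 1) := rfl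
      rw [h6]
      exact Continuous.comp (continuous_of_discreteTopology) (continuous_apply 1)
    have hε : Tendsto (fun k => (ν i {x : G → Fin r | ¬ x 1 = i}).toReal
        - (((D ((i : ℕ) + (k + 1) * r)).card : ℝ))⁻¹
            * S19.KCnt D J η i ((i : ℕ) + (k + 1) * r)) atTop (nhds 0) := by
      have h7 := hνlim _ hχcont
      rw [hintχν] at h7
      have h8 : Tendsto (fun k => (((D ((i : ℕ) + (k + 1) * r)).card : ℝ))⁻¹
          * S19.KCnt D J η i ((i : ℕ) + (k + 1) * r)) atTop
          (nhds ((ν i {x : G → Fin r | ¬ x 1 = i}).toReal)) := by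
        refine h7.congr (fun k => ?_)
        exact hμseqint k
      have h9 := Tendsto.const_sub ((ν i {x : G → Fin r | ¬ x 1 = i}).toReal) h8
      simpa using h9
    have hbound : ∀ k : ℕ,
        |(μ {x | ∀ p ∈ F, x p = w p}).toReal - (ν i {x | ∀ p ∈ F, x p = w p}).toReal|
        ≤ 2 * (F.card : ℝ) * ((ν i {x : G → Fin r | ¬ x 1 = i}).toReal
            - (((D ((i : ℕ) + (k + 1) * r)).card : ℝ))⁻¹
                * S19.KCnt D J η i ((i : ℕ) + (k + 1) * r)) := by
      intro k
      set M := (i : ℕ) + (k + 1) * r with hM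
      set T : ℝ := ((D M).card : ℝ) with hT
      set K : ℝ := S19.KCnt D J η i M with hK
      set m0 : ℝ := (ν i {x : G → Fin r | ¬ x 1 = i}).toReal with hm0
      have hTpos : (0:ℝ) < T := by
        rw [hT]
        exact_mod_cast Finset.card_pos.mpr ⟨1, hone M⟩
      have hmμ := S19.main_estimate hr Γ hanti hnormal D hfund J hJ η hηdef X hX i F w M
        (hNK1 k) μ hμinv hμX
      have hmν := S19.main_estimate hr Γ hanti hnormal D hfund J hJ η hηdef X hX i F w M
        (hNK1 k) (ν i) hνinv hνX
      rw [hagreeN] at hmμ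
      set a : ℝ := (μ {x | ∀ p ∈ F, x p = w p}).toReal with ha
      set b : ℝ := (ν i {x | ∀ p ∈ F, x p = w p}).toReal with hb
      set AC : ℝ := S19.ACnt Γ D hfund J η i F w M with hAC
      have htri : |T * a - T * b| ≤ 2 * (F.card : ℝ) * (T * m0 - K) := by
        have t1 : |T * a - T * b| ≤ |T * a - AC| + |AC - T * b| := abs_sub_le _ _ _
        have t2 : |AC - T * b| = |T * b - AC| := abs_sub_comm _ _
        have t3 : |T * a - AC| ≤ (F.card : ℝ) * (T * m0 - K) := hmμ
        have t4 : |T * b - AC| ≤ (F.card : ℝ) * (T * m0 - K) := hmν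
        linarith
      have habs : |T * a - T * b| = T * |a - b| := by
        rw [← mul_sub, abs_mul, abs_of_pos hTpos]
      have hTK : T * (T⁻¹ * K) = K := by
        rw [← mul_assoc, mul_inv_cancel₀ (ne_of_gt hTpos), one_mul]
      have heq : T * (2 * (F.card : ℝ) * (m0 - T⁻¹ * K)) = 2 * (F.card : ℝ) * (T * m0 - K) := by
        calc T * (2 * (F.card : ℝ) * (m0 - T⁻¹ * K))
            = 2 * (F.card : ℝ) * (T * m0 - T * (T⁻¹ * K)) := by ring
          _ = 2 * (F.card : ℝ) * (T * m0 - K) := by rw [hTK]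
      have h9 : T * |a - b| ≤ T * (2 * (F.card : ℝ) * (m0 - T⁻¹ * K)) := by
        rw [heq, ← habs]; exact htri
      exact le_of_mul_le_mul_left h9 hTpos
    have hfinal : |(μ {x | ∀ p ∈ F, x p = w p}).toReal
        - (ν i {x | ∀ p ∈ F, x p = w p}).toReal| ≤ 0 := by
      have h10 : Tendsto (fun k => 2 * (F.card : ℝ)
          * ((ν i {x : G → Fin r | ¬ x 1 = i}).toReal
            - (((D ((i : ℕ) + (k + 1) * r)).card : ℝ))⁻¹
                * S19.KCnt D J η i ((i : ℕ) + (k + 1) * r))) atTop (nhds 0) := by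
        simpa using hε.const_mul (2 * (F.card : ℝ))
      exact ge_of_tendsto' h10 hbound
    have h11 : (μ {x | ∀ p ∈ F, x p = w p}).toReal
        = (ν i {x | ∀ p ∈ F, x p = w p}).toReal := by
      have h12 : |(μ {x | ∀ p ∈ F, x p = w p}).toReal
          - (ν i {x | ∀ p ∈ F, x p = w p}).toReal| = 0 :=
        le_antisymm hfinal (abs_nonneg _)
      have := abs_eq_zero.mp h12
      linarith
    exact (ENNReal.toReal_eq_toReal_iff' (measure_ne_top μ _) (measure_ne_top (ν i) _)).mp h11
  -- π-system argument
  set 𝒞 : Set (Set (G → Fin r)) :=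
    {s | ∃ (F : Finset G) (w : G → Fin r), s = {x | ∀ p ∈ F, x p = w p}} with h𝒞
  have hgen : (inferInstance : MeasurableSpace (G → Fin r))
      = MeasurableSpace.generateFrom 𝒞 := by
    refine le_antisymm ?_ ?_
    · have hmeas_eval : ∀ a : G,
          @Measurable _ _ (MeasurableSpace.generateFrom 𝒞) _ (fun x : G → Fin r => x a) := by
        intro a S _hS
        have hpre : (fun x : G → Fin r => x a) ⁻¹' S = ⋃ v ∈ S, {x : G → Fin r | x a = v} := by
          ext x; simp
        rw [hpre]
        refine MeasurableSet.biUnion (Set.to_countable S) (fun v _ => ?_)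
        apply MeasurableSpace.measurableSet_generateFrom
        refine ⟨{a}, (fun _ => v), ?_⟩
        ext x; simp
      have hid : @Measurable _ _ (MeasurableSpace.generateFrom 𝒞) _
          (id : (G → Fin r) → (G → Fin r)) :=
        (@measurable_pi_iff _ _ _ (MeasurableSpace.generateFrom 𝒞) _ _).mpr
          (fun a => hmeas_eval a)
      exact fun s hs => hid hs
    · refine MeasurableSpace.generateFrom_le ?_
      rintro s ⟨F, w, rfl⟩
      have h13 : {x : G → Fin r | ∀ p ∈ F, x p = w p}
          = ⋂ p ∈ F, (fun x : G → Fin r => x p) ⁻¹' {w p} := by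
        ext x; simp
      rw [h13]
      exact MeasurableSet.biInter F.countable_toSet
        (fun p _ => (measurable_pi_apply p) (measurableSet_singleton _))
  have hpi : IsPiSystem 𝒞 := by
    rintro s ⟨F₁, w₁, rfl⟩ t ⟨F₂, w₂, rfl⟩ hne
    refine ⟨F₁ ∪ F₂, fun p => if p ∈ F₁ then w₁ p else w₂ p, ?_⟩
    obtain ⟨z, hz₁, hz₂⟩ := hne
    ext x
    simp only [Set.mem_inter_iff, Set.mem_setOf_eq, Finset.mem_union]
    constructor
    · rintro ⟨h1, h2⟩ p hp
      by_cases hpF1 : p ∈ F₁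
      · rw [if_pos hpF1]; exact h1 p hpF1
      · rw [if_neg hpF1]; exact h2 p (hp.resolve_left hpF1)
    · intro h
      constructor
      · intro p hp
        have h14 := h p (Or.inl hp); rwa [if_pos hp] at h14
      · intro p hp
        by_cases hpF1 : p ∈ F₁
        · have hza : z p = w₁ p := hz₁ p hpF1
          have hzb : z p = w₂ p := hz₂ p hp
          have h14 := h p (Or.inl hpF1); rw [if_pos hpF1] at h14
          rw [h14, ← hza, hzb]
        · have h14 := h p (Or.inr hp); rwa [if_neg hpF1] at h14
  refine MeasureTheory.ext_of_generate_finite 𝒞 hgen hpi ?_ ?_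
  · rintro s ⟨F, w, rfl⟩
    exact cylEq F w
  · simp [measure_univ]
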